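/- First-order commutator bound used in the proofs of Lemma 2.2 and Proposition 2.4: Let α, β, α' ∈ ℕ³ be multi-indices with α' < α, and set θ := max(|α|, |β|). There exists a constant C, depending only on α, β, α', such that for all ℤ³-periodic smooth vector fields ξ and f: |⟨D^β f, B_{D^{α−α'}ξ}(𝓛_ξ(D^{α'} f)) − 𝓛_ξ(B_{D^{α−α'}ξ}(D^{α'} f))⟩_{L²}| ≤ C ‖ξ‖_{W^{θ+2,∞}}² ‖f‖_{W^{θ,2}}². -/

import Mathlib

open MeasureTheory

noncomputable section

/-- Points of ℝ³ (as `Fin 3 → ℝ`). -/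
abbrev V3 := Fin 3 → ℝ
/-- Vector fields on ℝ³. -/
abbrev VF := V3 → V3

/-- Smoothness of a vector field. -/
def SmoothVF (f : VF) : Prop := ContDiff ℝ (⊤ : ℕ∞) f

/-- Smoothness of a scalar function. -/
def SmoothS (p : V3 → ℝ) : Prop := ContDiff ℝ (⊤ : ℕ∞) p

/-- The periodicity cell [0,1)³. -/
def cube : Set V3 := Set.univ.pi fun _ => Set.Ico (0:ℝ) 1

/-- Partial derivative in the j-th coordinate, acting componentwise. -/
def pd (j : Fin 3) (f : VF) : VF := fun x => fderiv ℝ f x (Pi.single j 1)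

/-- Iterated derivative D^α = ∂₁^{α₁}∂₂^{α₂}∂₃^{α₃} for a multi-index α = (α₁, α₂, α₃). -/
def Dm (α : ℕ × ℕ × ℕ) (f : VF) : VF :=
  (pd 0)^[α.1] ((pd 1)^[α.2.1] ((pd 2)^[α.2.2] f))

/-- The order |α| of a multi-index. -/
def mdeg (α : ℕ × ℕ × ℕ) : ℕ := α.1 + α.2.1 + α.2.2

/-- ℤ³-periodicity of a vector field. -/
def Periodic3 (f : VF) : Prop :=
  ∀ (x : V3) (k : Fin 3 → ℤ), f (x + fun i => (k i : ℝ)) = f x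

/-- ℤ³-periodicity of a scalar function. -/
def PeriodicS (p : V3 → ℝ) : Prop :=
  ∀ (x : V3) (k : Fin 3 → ℤ), p (x + fun i => (k i : ℝ)) = p x

/-- Divergence-free: Σ_j ∂_j f^j ≡ 0. -/
def DivFree (f : VF) : Prop := ∀ x, ∑ j, pd j f x j = 0

/-- Mean-zero over the periodicity cell. -/
def MeanZero (f : VF) : Prop := (∫ x in cube, f x) = 0

/-- The L² inner product over the periodicity cell. -/
def L2inner (f g : VF) : ℝ := ∫ x in cube, ∑ i, f x i * g x i

/-- The finite set of multi-indices of order at most m. -/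
def midx (m : ℕ) : Finset (ℕ × ℕ × ℕ) :=
  (Finset.range (m+1) ×ˢ Finset.range (m+1) ×ˢ Finset.range (m+1)).filter
    fun α => mdeg α ≤ m

lemma midx_nonempty (m : ℕ) : (midx m).Nonempty :=
  ⟨(0,0,0), by unfold midx; exact Finset.mem_filter.mpr ⟨by simp, by simp [mdeg]⟩⟩

/-- The W^{m,2} inner product ⟨f,g⟩_{W^{m,2}} = Σ_{|α|≤m} ⟨D^α f, D^α g⟩_{L²}. -/
def sobInner (m : ℕ) (f g : VF) : ℝ := ∑ α ∈ midx m, L2inner (Dm α f) (Dm α g)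

/-- The squared W^{m,2} norm. -/
def sobNormSq (m : ℕ) (f : VF) : ℝ := sobInner m f f

/-- The W^{k,∞} norm: max over |α| ≤ k of sup_x |D^α ξ(x)|. -/
def WinfNorm (k : ℕ) (ξ : VF) : ℝ :=
  (midx k).sup' (midx_nonempty k) fun α => ⨆ x, ‖Dm α ξ x‖

/-- The transport operator 𝓛_ξ f = Σ_j ξ^j ∂_j f. -/
def transport (ξ f : VF) : VF := fun x => ∑ j, ξ x j • pd j f x

/-- The stretching operator 𝓣_ξ f, with l-th component Σ_j f^j ∂_l ξ^j. -/
def stretch (ξ f : VF) : VF := fun x l => ∑ j, f x j * pd l ξ x j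

/-- The L²-adjoint 𝓣*_ξ g, with j-th component Σ_l g^l ∂_l ξ^j. -/
def stretchStar (ξ g : VF) : VF := fun x j => ∑ l, g x l * pd l ξ x j

/-- The transport–stretching operator B_ξ = 𝓛_ξ + 𝓣_ξ. -/
def Bop (ξ f : VF) : VF := fun x => transport ξ f x + stretch ξ f x

/-- The gradient of a scalar function. -/
def grad (p : V3 → ℝ) : VF := fun x i => fderiv ℝ p x (Pi.single i 1)

/-- `IsLeray u g` : g is the Leray projection 𝒫u of u, i.e. g is a ℤ³-periodic smooth
divergence-free mean-zero field and u − g = ∇p + c for some ℤ³-periodic smooth scalar p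
and constant vector c. -/
def IsLeray (u g : VF) : Prop :=
  Periodic3 g ∧ SmoothVF g ∧ DivFree g ∧ MeanZero g ∧
  ∃ (p : V3 → ℝ) (c : V3), PeriodicS p ∧ SmoothS p ∧
    ∀ x, u x - g x = grad p x + c

/-- The componentwise Laplacian. -/
def lap (f : VF) : VF := fun x => ∑ j, pd j (pd j f) x

/-- The Stokes inner product ⟨u,v⟩_{A^{m/2}}. -/
def stokesInner (m : ℕ) (u v : VF) : ℝ :=
  if m % 2 = 0 then L2inner (lap^[m/2] u) (lap^[m/2] v)
  else ∑ j : Fin 3, L2inner (pd j (lap^[m/2] u)) (pd j (lap^[m/2] v))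

/-- A ℤ³-periodic smooth divergence-free mean-zero vector field. -/
def GoodField (f : VF) : Prop :=
  Periodic3 f ∧ SmoothVF f ∧ DivFree f ∧ MeanZero f

def pdS (j : Fin 3) (p : V3 → ℝ) : V3 → ℝ := fun x => fderiv ℝ p x (Pi.single j 1)

lemma smooth_comp_scalar {f : VF} (hf : SmoothVF f) (i : Fin 3) :
    ContDiff ℝ (⊤ : ℕ∞) (fun x => f x i) :=
  ((ContinuousLinearMap.proj i : V3 →L[ℝ] ℝ).contDiff).comp hf

lemma pd_apply {f : VF} (hf : Differentiable ℝ f) (j i : Fin 3) (x : V3) :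
    pd j f x i = pdS j (fun y => f y i) x := by
  have h : fderiv ℝ (fun y => f y i) x =
      (ContinuousLinearMap.proj i : V3 →L[ℝ] ℝ).comp (fderiv ℝ f x) :=
    (((ContinuousLinearMap.proj i : V3 →L[ℝ] ℝ).hasFDerivAt).comp x (hf x).hasFDerivAt).fderiv
  simp [pd, pdS, h]

lemma pdS_mul {a b : V3 → ℝ} {x : V3} (ha : DifferentiableAt ℝ a x)
    (hb : DifferentiableAt ℝ b x) (j : Fin 3) :
    pdS j (fun y => a y * b y) x = pdS j a x * b x + a x * pdS j b x := by
  simp only [pdS, fderiv_fun_mul ha hb, ContinuousLinearMap.add_apply,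
    ContinuousLinearMap.smul_apply, smul_eq_mul]
  ring

lemma pdS_sum {ι : Type*} {s : Finset ι} {F : ι → V3 → ℝ} {x : V3}
    (h : ∀ k ∈ s, DifferentiableAt ℝ (F k) x) (j : Fin 3) :
    pdS j (fun y => ∑ k ∈ s, F k y) x = ∑ k ∈ s, pdS j (F k) x := by
  simp only [pdS, fderiv_fun_sum h]
  simp

lemma pdS_add {a b : V3 → ℝ} {x : V3} (ha : DifferentiableAt ℝ a x)
    (hb : DifferentiableAt ℝ b x) (j : Fin 3) :
    pdS j (fun y => a y + b y) x = pdS j a x + pdS j b x := by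
  simp only [pdS, fderiv_fun_add ha hb]; simp

lemma smooth_pd' {f : VF} (hf : SmoothVF f) (j : Fin 3) : SmoothVF (pd j f) :=
  (hf.fderiv_right (mod_cast le_top)).clm_apply contDiff_const

lemma pd_comm {f : VF} (hf : SmoothVF f) (j k : Fin 3) :
    pd j (pd k f) = pd k (pd j f) := by
  funext x
  have hd : Differentiable ℝ (fderiv ℝ f) :=
    (hf.fderiv_right (mod_cast le_top) : ContDiff ℝ (⊤ : ℕ∞) (fderiv ℝ f)).differentiable
      (by simp)
  have hsym : ∀ v w, fderiv ℝ (fderiv ℝ f) x v w = fderiv ℝ (fderiv ℝ f) x w v := by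
    intro v w
    exact second_derivative_symmetric (f := f) (f' := fderiv ℝ f)
      (fun y => (hf.differentiable (by simp) y).hasFDerivAt)
      (hd x).hasFDerivAt v w
  have key : ∀ a b : Fin 3, pd a (pd b f) x = fderiv ℝ (fderiv ℝ f) x (Pi.single a 1) (Pi.single b 1) := by
    intro a b
    have hc := ((ContinuousLinearMap.apply ℝ V3 (Pi.single b 1)).hasFDerivAt
      (x := fderiv ℝ f x)).comp x (hd x).hasFDerivAt
    have hc2 : fderiv ℝ (fun y => (fderiv ℝ f y) (Pi.single b 1)) x
        = (ContinuousLinearMap.apply ℝ V3 (Pi.single b 1)).comp (fderiv ℝ (fderiv ℝ f) x) :=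
      hc.fderiv
    show fderiv ℝ (fun y => (fderiv ℝ f y) (Pi.single b 1)) x (Pi.single a 1) = _
    rw [hc2]; rfl
  rw [key j k, key k j]; exact funext fun _ => by rw [hsym]

lemma smooth_pd_iter {f : VF} (hf : SmoothVF f) (k : Fin 3) (n : ℕ) :
    SmoothVF ((pd k)^[n] f) := by
  induction n with
  | zero => exact hf
  | succ n ih => rw [Function.iterate_succ_apply']; exact smooth_pd' ih k

lemma smooth_Dm {f : VF} (hf : SmoothVF f) (γ : ℕ × ℕ × ℕ) : SmoothVF (Dm γ f) :=
  smooth_pd_iter (smooth_pd_iter (smooth_pd_iter hf 2 _) 1 _) 0 _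

lemma pd_iter_comm {f : VF} (hf : SmoothVF f) (j k : Fin 3) (n : ℕ) :
    pd j ((pd k)^[n] f) = (pd k)^[n] (pd j f) := by
  induction n with
  | zero => rfl
  | succ n ih =>
    rw [Function.iterate_succ_apply', Function.iterate_succ_apply',
      pd_comm (smooth_pd_iter hf k n) j k, ih]

/-- unit multi-index for direction j -/

def eI : Fin 3 → ℕ × ℕ × ℕ := ![(1,0,0),(0,1,0),(0,0,1)]

lemma mdeg_eI (j : Fin 3) : mdeg (eI j) = 1 := by fin_cases j <;> rfl

lemma pd_Dm {f : VF} (hf : SmoothVF f) (j : Fin 3) (γ : ℕ × ℕ × ℕ) :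
    pd j (Dm γ f) = Dm (γ + eI j) f := by
  obtain ⟨a, b, c⟩ := γ
  fin_cases j
  · show pd 0 (Dm (a,b,c) f) = Dm (a+1, b+0, c+0) f
    simp only [Dm, Function.iterate_succ_apply']
    rfl
  · show pd 1 (Dm (a,b,c) f) = Dm (a+0, b+1, c+0) f
    simp only [Dm]
    rw [pd_iter_comm (smooth_pd_iter (smooth_pd_iter hf 2 c) 1 b) 1 0 a,
      Function.iterate_succ_apply']
    simp
  · show pd 2 (Dm (a,b,c) f) = Dm (a+0, b+0, c+1) f
    simp only [Dm]
    rw [pd_iter_comm (smooth_pd_iter (smooth_pd_iter hf 2 c) 1 b) 2 0 a,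
      pd_iter_comm (smooth_pd_iter hf 2 c) 2 1 b,
      Function.iterate_succ_apply']
    simp

lemma periodic_pd {f : VF} (hf : SmoothVF f) (hp : Periodic3 f) (j : Fin 3) :
    Periodic3 (pd j f) := by
  intro x k
  have hfe : f = fun y => f (y + fun i => (k i : ℝ)) := funext fun y => (hp y k).symm
  have h1 : HasFDerivAt (fun y : V3 => f (y + fun i => (k i : ℝ)))
      (fderiv ℝ f (x + fun i => (k i : ℝ))) x := by
    have ht : HasFDerivAt (fun y : V3 => y + fun i => (k i : ℝ))
        (ContinuousLinearMap.id ℝ V3) x := (hasFDerivAt_id x).add_const _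
    have := (hf.differentiable (by simp) (x + fun i => (k i : ℝ))).hasFDerivAt.comp x ht
    simpa using this
  have h2 : fderiv ℝ f x = fderiv ℝ f (x + fun i => (k i : ℝ)) := by
    conv_lhs => rw [hfe]
    exact h1.fderiv
  show fderiv ℝ f (x + fun i => (k i : ℝ)) (Pi.single j 1) = fderiv ℝ f x (Pi.single j 1)
  rw [h2]

lemma periodic_pd_iter {f : VF} (hf : SmoothVF f) (hp : Periodic3 f) (k : Fin 3) (n : ℕ) :
    Periodic3 ((pd k)^[n] f) := by
  induction n with
  | zero => exact hp
  | succ n ih =>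
    rw [Function.iterate_succ_apply']
    exact periodic_pd (smooth_pd_iter hf k n) ih k

lemma periodic_Dm {f : VF} (hf : SmoothVF f) (hp : Periodic3 f) (γ : ℕ × ℕ × ℕ) :
    Periodic3 (Dm γ f) :=
  periodic_pd_iter (smooth_pd_iter (smooth_pd_iter hf 2 _) 1 _)
    (periodic_pd_iter (smooth_pd_iter hf 2 _)
      (periodic_pd_iter hf hp 2 _) 1 _) 0 _

lemma mem_midx {γ : ℕ × ℕ × ℕ} {m : ℕ} (h : mdeg γ ≤ m) : γ ∈ midx m := by
  obtain ⟨a, b, c⟩ := γ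
  simp only [mdeg] at h
  unfold midx
  refine Finset.mem_filter.mpr ⟨?_, ?_⟩
  · simp only [Finset.mem_product, Finset.mem_range]; omega
  · simp only [mdeg]; omega

lemma periodic_bddAbove {F : V3 → ℝ} (hc : Continuous F)
    (hp : ∀ (x : V3) (k : Fin 3 → ℤ), F (x + fun i => (k i : ℝ)) = F x) :
    BddAbove (Set.range F) := by
  have hcomp : IsCompact (F '' Set.Icc (0 : V3) 1) :=
    (isCompact_Icc).image hc
  apply BddAbove.mono _ hcomp.bddAbove
  rintro - ⟨x, rfl⟩
  refine ⟨fun i => Int.fract (x i), ⟨fun i => ?_, fun i => ?_⟩, ?_⟩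
  · exact Int.fract_nonneg _
  · exact (Int.fract_lt_one _).le
  · have := hp x (fun i => -⌊x i⌋)
    rw [← this]
    congr 1
    funext i
    simp [Int.fract, sub_eq_add_neg]

lemma abs_Dm_le_Winf {ξ : VF} (hξ : SmoothVF ξ) (hp : Periodic3 ξ) {γ : ℕ × ℕ × ℕ} {m : ℕ}
    (hγ : γ ∈ midx m) (x : V3) (j : Fin 3) : |Dm γ ξ x j| ≤ WinfNorm m ξ := by
  have hcont : Continuous (Dm γ ξ) := (smooth_Dm hξ γ).continuous
  have hbdd : BddAbove (Set.range fun x => ‖Dm γ ξ x‖) :=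
    periodic_bddAbove (hcont.norm) (fun x k => by rw [periodic_Dm hξ hp γ x k])
  have h1 : |Dm γ ξ x j| ≤ ‖Dm γ ξ x‖ := by
    simpa [Real.norm_eq_abs] using norm_le_pi_norm (Dm γ ξ x) j
  have h2 : ‖Dm γ ξ x‖ ≤ ⨆ y, ‖Dm γ ξ y‖ := le_ciSup hbdd x
  exact h1.trans (h2.trans (Finset.le_sup' (fun α => ⨆ y, ‖Dm α ξ y‖) hγ))

lemma Winf_nonneg {ξ : VF} (hξ : SmoothVF ξ) (hp : Periodic3 ξ) (m : ℕ) :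
    0 ≤ WinfNorm m ξ :=
  (abs_nonneg _).trans (abs_Dm_le_Winf hξ hp (mem_midx (γ := (0,0,0)) (by simp [mdeg])) 0 0)

lemma transport_apply (ξ g : VF) (x : V3) (i : Fin 3) :
    transport ξ g x i = ∑ k, ξ x k * pd k g x i := by
  simp [transport, Finset.sum_apply, Pi.smul_apply, smul_eq_mul]

lemma smooth_transport {ξ g : VF} (hξ : SmoothVF ξ) (hg : SmoothVF g) :
    SmoothVF (transport ξ g) := by
  refine ContDiff.sum fun j _ => ContDiff.fun_smul ?_ ?_
  · exact smooth_comp_scalar hξ j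
  · exact smooth_pd' hg j

lemma smooth_stretch {ξ g : VF} (hξ : SmoothVF ξ) (hg : SmoothVF g) :
    SmoothVF (stretch ξ g) := by
  refine contDiff_pi.2 fun l => ContDiff.sum fun j _ => ContDiff.mul ?_ ?_
  · exact smooth_comp_scalar hg j
  · exact smooth_comp_scalar (smooth_pd' hξ l) j

lemma smooth_Bop {ξ g : VF} (hξ : SmoothVF ξ) (hg : SmoothVF g) :
    SmoothVF (Bop ξ g) := (smooth_transport hξ hg).add (smooth_stretch hξ hg)

lemma diffAt_comp {f : VF} (hf : SmoothVF f) (i : Fin 3) (x : V3) :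
    DifferentiableAt ℝ (fun y => f y i) x :=
  ((smooth_comp_scalar hf i).differentiable (by simp)) x

lemma pd_transport {ξ g : VF} (hξ : SmoothVF ξ) (hg : SmoothVF g) (m i : Fin 3) (x : V3) :
    pd m (transport ξ g) x i
      = ∑ k, (pd m ξ x k * pd k g x i + ξ x k * pd m (pd k g) x i) := by
  rw [pd_apply ((smooth_transport hξ hg).differentiable (by simp)) m i x]
  rw [show (fun y => transport ξ g y i) = (fun y => ∑ k, ξ y k * pd k g y i) from
    funext fun y => transport_apply ξ g y i]
  rw [pdS_sum (F := fun k y => ξ y k * pd k g y i) (fun k _ => (diffAt_comp hξ k x).mul (diffAt_comp (smooth_pd' hg k) i x)) m]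
  refine Finset.sum_congr rfl fun k _ => ?_
  rw [pdS_mul (diffAt_comp hξ k x) (diffAt_comp (smooth_pd' hg k) i x) m,
    ← pd_apply (hξ.differentiable (by simp)) m k x,
    ← pd_apply ((smooth_pd' hg k).differentiable (by simp)) m i x]

lemma pd_stretch {η g : VF} (hη : SmoothVF η) (hg : SmoothVF g) (m i : Fin 3) (x : V3) :
    pd m (stretch η g) x i
      = ∑ j, (pd m g x j * pd i η x j + g x j * pd m (pd i η) x j) := by
  rw [pd_apply ((smooth_stretch hη hg).differentiable (by simp)) m i x]
  rw [show (fun y => stretch η g y i) = (fun y => ∑ j, g y j * pd i η y j) from rfl]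
  rw [pdS_sum (F := fun j y => g y j * pd i η y j) (fun j _ => (diffAt_comp hg j x).mul (diffAt_comp (smooth_pd' hη i) j x)) m]
  refine Finset.sum_congr rfl fun j _ => ?_
  rw [pdS_mul (diffAt_comp hg j x) (diffAt_comp (smooth_pd' hη i) j x) m,
    ← pd_apply (hg.differentiable (by simp)) m j x,
    ← pd_apply ((smooth_pd' hη i).differentiable (by simp)) m j x]

lemma pd_Bop {η g : VF} (hη : SmoothVF η) (hg : SmoothVF g) (k i : Fin 3) (x : V3) :
    pd k (Bop η g) x i = pd k (transport η g) x i + pd k (stretch η g) x i := by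
  rw [pd_apply ((smooth_Bop hη hg).differentiable (by simp)) k i x,
    show (fun y => Bop η g y i) = (fun y => transport η g y i + stretch η g y i) from rfl,
    pdS_add (diffAt_comp (smooth_transport hη hg) i x)
      (diffAt_comp (smooth_stretch hη hg) i x) k,
    ← pd_apply ((smooth_transport hη hg).differentiable (by simp)) k i x,
    ← pd_apply ((smooth_stretch hη hg).differentiable (by simp)) k i x]

lemma key_identity {ξ η g : VF} (hξ : SmoothVF ξ) (hη : SmoothVF η) (hg : SmoothVF g)
    (x : V3) (i : Fin 3) :
    Bop η (transport ξ g) x i - transport ξ (Bop η g) x i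
      = ∑ j, ∑ k, (η x j * pd j ξ x k * pd k g x i
          - ξ x k * pd k η x j * pd j g x i
          - ξ x k * g x j * pd k (pd i η) x j) := by
  have hB : Bop η (transport ξ g) x i
      = transport η (transport ξ g) x i + stretch η (transport ξ g) x i := rfl
  rw [hB, transport_apply η (transport ξ g) x i]
  have hst : stretch η (transport ξ g) x i = ∑ j, (∑ k, ξ x k * pd k g x j) * pd i η x j := by
    show (∑ j, transport ξ g x j * pd i η x j) = _
    exact Finset.sum_congr rfl fun j _ => by rw [transport_apply]
  rw [hst, transport_apply ξ (Bop η g) x i]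
  have h1 : ∀ m, pd m (transport ξ g) x i
      = ∑ k, (pd m ξ x k * pd k g x i + ξ x k * pd m (pd k g) x i) :=
    fun m => pd_transport hξ hg m i x
  simp only [h1]
  have h2' : ∀ k, pd k (Bop η g) x i
      = (∑ j, (pd k η x j * pd j g x i + η x j * pd k (pd j g) x i))
        + (∑ j, (pd k g x j * pd i η x j + g x j * pd k (pd i η) x j)) := fun k => by
    rw [pd_Bop hη hg k i x, pd_transport hη hg k i x, pd_stretch hη hg k i x]
  simp only [h2']
  simp only [Fin.sum_univ_three]
  rw [pd_comm hg 1 0, pd_comm hg 2 0, pd_comm hg 2 1]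
  ring

lemma cube_subset_Icc : cube ⊆ Set.Icc (0 : V3) 1 := by
  intro x hx
  constructor <;> intro i
  · exact (hx i (Set.mem_univ i)).1
  · exact (hx i (Set.mem_univ i)).2.le

lemma integrableOn_cube {G : V3 → ℝ} (hG : Continuous G) : IntegrableOn G cube := by
  exact (hG.continuousOn.integrableOn_compact isCompact_Icc).mono_set cube_subset_Icc

lemma bound_one {a b t N S : ℝ} (hN : 0 ≤ N) (ht : |t| ≤ N ^ 2 * |b|)
    (ha : a * a ≤ S) (hb : b * b ≤ S) : |a * t| ≤ N ^ 2 * S := by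
  have h1 : |a| * |b| ≤ S := by
    nlinarith [abs_nonneg a, abs_nonneg b, abs_mul_abs_self a, abs_mul_abs_self b,
      sq_nonneg (|a| - |b|)]
  calc |a * t| = |a| * |t| := abs_mul a t
    _ ≤ |a| * (N ^ 2 * |b|) := by
        exact mul_le_mul_of_nonneg_left ht (abs_nonneg a)
    _ = N ^ 2 * (|a| * |b|) := by ring
    _ ≤ N ^ 2 * S := by
        exact mul_le_mul_of_nonneg_left h1 (by positivity)

lemma shapeA {c d b N : ℝ} (hc : |c| ≤ N) (hd : |d| ≤ N) :
    |c * d * b| ≤ N ^ 2 * |b| := by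
  rw [abs_mul, abs_mul]
  have : |c| * |d| ≤ N ^ 2 := by nlinarith [abs_nonneg c, abs_nonneg d]
  exact mul_le_mul_of_nonneg_right this (abs_nonneg b)

lemma shapeB {c d b N : ℝ} (hc : |c| ≤ N) (hd : |d| ≤ N) :
    |c * b * d| ≤ N ^ 2 * |b| := by
  have : c * b * d = c * d * b := by ring
  rw [this]; exact shapeA hc hd

/-- First-order commutator bound used in the proofs of Lemma 2.2 and Proposition 2.4. -/
theorem stmt15 (α β α' : ℕ × ℕ × ℕ) (hle : α' ≤ α) (hne : α' ≠ α) :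
    ∃ C : ℝ, ∀ ξ f : VF, Periodic3 ξ → SmoothVF ξ → Periodic3 f → SmoothVF f →
      |L2inner (Dm β f)
          (fun x => Bop (Dm (α - α') ξ) (transport ξ (Dm α' f)) x
            - transport ξ (Bop (Dm (α - α') ξ) (Dm α' f)) x)| ≤
      C * WinfNorm (max (mdeg α) (mdeg β) + 2) ξ ^ 2
        * sobNormSq (max (mdeg α) (mdeg β)) f := by
  refine ⟨81, fun ξ f hpξ hξ hpf hf => ?_⟩
  set θ := max (mdeg α) (mdeg β) with hθ
  set N := WinfNorm (θ + 2) ξ with hNdef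
  set γ0 := α - α' with hγ0
  set η := Dm γ0 ξ with hη
  set g := Dm α' f with hg
  have hηs : SmoothVF η := smooth_Dm hξ γ0
  have hgs : SmoothVF g := smooth_Dm hf α'
  have hN0 : 0 ≤ N := Winf_nonneg hξ hpξ _
  -- multi-index degree facts
  have hlt : mdeg α' < mdeg α := by
    obtain ⟨a1, b1, c1⟩ := α'
    obtain ⟨a2, b2, c2⟩ := α
    simp only [Prod.mk_le_mk, Prod.le_def] at hle
    simp only [ne_eq, Prod.mk.injEq, not_and] at hne
    simp only [mdeg]
    rcases Nat.lt_or_ge (a1 + b1 + c1) (a2 + b2 + c2) with h | h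
    · exact h
    · exfalso
      have h1 : a1 = a2 := by omega
      have h2 : b1 = b2 := by omega
      have h3 : c1 = c2 := by omega
      exact hne h1 h2 h3
  have hγ0deg : mdeg γ0 ≤ mdeg α := by
    obtain ⟨a1, b1, c1⟩ := α'
    obtain ⟨a2, b2, c2⟩ := α
    simp only [hγ0, mdeg, Prod.mk_sub_mk]
    omega
  have hdegα : mdeg α ≤ θ := le_max_left _ _
  have hdegβ : mdeg β ≤ θ := le_max_right _ _
  have heIadd : ∀ (γ : ℕ × ℕ × ℕ) (j : Fin 3), mdeg (γ + eI j) = mdeg γ + 1 := by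
    intro γ j
    obtain ⟨a, b, c⟩ := γ
    fin_cases j <;> simp [mdeg, eI] <;> omega
  -- ξ-factor bounds
  have hξ0 : ∀ (x : V3) (k : Fin 3), |ξ x k| ≤ N := by
    intro x k
    have := abs_Dm_le_Winf hξ hpξ (m := θ + 2) (mem_midx (γ := (0,0,0)) (by simp [mdeg])) x k
    simpa [Dm] using this
  have hξ1 : ∀ (x : V3) (j k : Fin 3), |pd j ξ x k| ≤ N := by
    intro x j k
    have heq : pd j ξ = Dm (eI j) ξ := by
      have h0 : ((0,0,0) : ℕ × ℕ × ℕ) + eI j = eI j := by fin_cases j <;> rfl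
      have := pd_Dm hξ j (0,0,0)
      rwa [h0] at this
    rw [heq]
    exact abs_Dm_le_Winf hξ hpξ (mem_midx (by rw [mdeg_eI]; omega)) x k
  have hη0 : ∀ (x : V3) (j : Fin 3), |η x j| ≤ N := fun x j =>
    abs_Dm_le_Winf hξ hpξ (mem_midx (by omega)) x j
  have hη1 : ∀ (x : V3) (k j : Fin 3), |pd k η x j| ≤ N := by
    intro x k j
    rw [hη, pd_Dm hξ k γ0]
    exact abs_Dm_le_Winf hξ hpξ (mem_midx (by rw [heIadd]; omega)) x j
  have hη2 : ∀ (x : V3) (k i j : Fin 3), |pd k (pd i η) x j| ≤ N := by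
    intro x k i j
    rw [hη, pd_Dm hξ i γ0, pd_Dm hξ k (γ0 + eI i)]
    exact abs_Dm_le_Winf hξ hpξ (mem_midx (by rw [heIadd, heIadd]; omega)) x j
  -- the quadratic weight
  set S : V3 → ℝ := fun x => ∑ γ ∈ midx θ, ∑ i, Dm γ f x i * Dm γ f x i with hS
  have hsqle : ∀ (δ : ℕ × ℕ × ℕ), δ ∈ midx θ → ∀ (x : V3) (i : Fin 3),
      Dm δ f x i * Dm δ f x i ≤ S x := by
    intro δ hδ x i
    have h1 : Dm δ f x i * Dm δ f x i ≤ ∑ i', Dm δ f x i' * Dm δ f x i' :=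
      Finset.single_le_sum (f := fun i' => Dm δ f x i' * Dm δ f x i')
        (fun i' _ => mul_self_nonneg _) (Finset.mem_univ i)
    refine h1.trans ?_
    exact Finset.single_le_sum (f := fun γ => ∑ i', Dm γ f x i' * Dm γ f x i')
      (fun γ _ => Finset.sum_nonneg fun i' _ => mul_self_nonneg _) hδ
  have hβmem : β ∈ midx θ := mem_midx hdegβ
  have hgmem : α' ∈ midx θ := mem_midx (by omega)
  have hgdmem : ∀ k : Fin 3, (α' + eI k) ∈ midx θ := fun k =>
    mem_midx (by rw [heIadd]; omega)
  -- pointwise bound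
  have hpt : ∀ x : V3,
      |∑ i, Dm β f x i *
        (Bop η (transport ξ g) x - transport ξ (Bop η g) x) i| ≤ 81 * N ^ 2 * S x := by
    intro x
    have hKi : ∀ i, (Bop η (transport ξ g) x - transport ξ (Bop η g) x) i
        = ∑ j, ∑ k, (η x j * pd j ξ x k * pd k g x i
            - ξ x k * pd k η x j * pd j g x i
            - ξ x k * g x j * pd k (pd i η) x j) := by
      intro i
      rw [Pi.sub_apply]
      exact key_identity hξ hηs hgs x i
    have hterm : ∀ i j k : Fin 3,
        |Dm β f x i * (η x j * pd j ξ x k * pd k g x i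
            - ξ x k * pd k η x j * pd j g x i
            - ξ x k * g x j * pd k (pd i η) x j)| ≤ 3 * (N ^ 2 * S x) := by
      intro i j k
      have ha : Dm β f x i * Dm β f x i ≤ S x := hsqle β hβmem x i
      have b1 : |Dm β f x i * (η x j * pd j ξ x k * pd k g x i)| ≤ N ^ 2 * S x := by
        refine bound_one hN0 (shapeA (hη0 x j) (hξ1 x j k)) ha ?_
        have : pd k g = Dm (α' + eI k) f := pd_Dm hf k α'
        rw [this]
        exact hsqle _ (hgdmem k) x i
      have b2 : |Dm β f x i * (ξ x k * pd k η x j * pd j g x i)| ≤ N ^ 2 * S x := by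
        refine bound_one hN0 (shapeA (hξ0 x k) (hη1 x k j)) ha ?_
        have : pd j g = Dm (α' + eI j) f := pd_Dm hf j α'
        rw [this]
        exact hsqle _ (hgdmem j) x i
      have b3 : |Dm β f x i * (ξ x k * g x j * pd k (pd i η) x j)| ≤ N ^ 2 * S x := by
        refine bound_one hN0 (shapeB (hξ0 x k) (hη2 x k i j)) ha ?_
        exact hsqle _ hgmem x j
      calc |Dm β f x i * (η x j * pd j ξ x k * pd k g x i
              - ξ x k * pd k η x j * pd j g x i
              - ξ x k * g x j * pd k (pd i η) x j)|
          = |Dm β f x i * (η x j * pd j ξ x k * pd k g x i)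
              - Dm β f x i * (ξ x k * pd k η x j * pd j g x i)
              - Dm β f x i * (ξ x k * g x j * pd k (pd i η) x j)| := by ring_nf
        _ ≤ |Dm β f x i * (η x j * pd j ξ x k * pd k g x i)
              - Dm β f x i * (ξ x k * pd k η x j * pd j g x i)|
            + |Dm β f x i * (ξ x k * g x j * pd k (pd i η) x j)| := abs_sub _ _
        _ ≤ |Dm β f x i * (η x j * pd j ξ x k * pd k g x i)|
            + |Dm β f x i * (ξ x k * pd k η x j * pd j g x i)|
            + |Dm β f x i * (ξ x k * g x j * pd k (pd i η) x j)| := by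
              have := abs_sub (Dm β f x i * (η x j * pd j ξ x k * pd k g x i))
                (Dm β f x i * (ξ x k * pd k η x j * pd j g x i))
              linarith
        _ ≤ 3 * (N ^ 2 * S x) := by linarith
    calc |∑ i, Dm β f x i * (Bop η (transport ξ g) x - transport ξ (Bop η g) x) i|
        ≤ ∑ i, |Dm β f x i * (Bop η (transport ξ g) x - transport ξ (Bop η g) x) i| :=
          Finset.abs_sum_le_sum_abs _ _
      _ ≤ ∑ _i : Fin 3, ∑ _j : Fin 3, ∑ _k : Fin 3, 3 * (N ^ 2 * S x) := by
          refine Finset.sum_le_sum fun i _ => ?_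
          rw [hKi i, Finset.mul_sum]
          refine (Finset.abs_sum_le_sum_abs _ _).trans ?_
          refine Finset.sum_le_sum fun j _ => ?_
          rw [Finset.mul_sum]
          refine (Finset.abs_sum_le_sum_abs _ _).trans ?_
          exact Finset.sum_le_sum fun k _ => hterm i j k
      _ = 81 * N ^ 2 * S x := by
          simp [Finset.sum_const]
          ring
  -- integral estimate
  have hScont : Continuous S := by
    refine continuous_finset_sum _ fun γ _ => continuous_finset_sum _ fun i _ => ?_
    have hc := (smooth_Dm hf γ).continuous
    exact ((continuous_apply i).comp hc).mul ((continuous_apply i).comp hc)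
  have hSint_eq : ∫ x in cube, S x = sobNormSq θ f := by
    rw [hS, integral_finset_sum _ (fun γ _ => integrableOn_cube
      (continuous_finset_sum _ fun i _ => by
        have hc := (smooth_Dm hf γ).continuous
        exact ((continuous_apply i).comp hc).mul ((continuous_apply i).comp hc)))]
    rfl
  calc |L2inner (Dm β f) (fun x => Bop η (transport ξ g) x - transport ξ (Bop η g) x)|
      = |∫ x in cube, ∑ i, Dm β f x i *
          (Bop η (transport ξ g) x - transport ξ (Bop η g) x) i| := rfl
    _ ≤ ∫ x in cube, |∑ i, Dm β f x i *
          (Bop η (transport ξ g) x - transport ξ (Bop η g) x) i| := by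
        have := norm_integral_le_integral_norm (μ := volume.restrict cube)
          (f := fun x => ∑ i, Dm β f x i *
            (Bop η (transport ξ g) x - transport ξ (Bop η g) x) i)
        simpa [Real.norm_eq_abs] using this
    _ ≤ ∫ x in cube, 81 * N ^ 2 * S x := by
        refine integral_mono_of_nonneg (Filter.Eventually.of_forall fun x => abs_nonneg _)
          (integrableOn_cube (continuous_const.mul hScont)) ?_
        exact Filter.Eventually.of_forall fun x => hpt x
    _ = 81 * N ^ 2 * ∫ x in cube, S x := integral_const_mul _ _
    _ = 81 * N ^ 2 * sobNormSq θ f := by rw [hSint_eq]
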